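/- arXiv:1312.3433 — 6 statements merged into one kernel-verified Lean document; each statement's English description precedes it below -/
import Mathlib

section
/- Let K be a field and q ∈ K a unit that is not a root of unity. Let V be a finite-dimensional K-vector space, d ≥ 0, and A, A* : V → V linear maps. Suppose: θ_i = α + b·q^{2i−d} + c·q^{d−2i} and θ*_i = α* + b*·q^{2i−d} + c*·q^{d−2i} (0 ≤ i ≤ d) are two sequences of pairwise distinct scalars with b, c, b*, c* nonzero; V_i is the θ_i-eigenspace of A with V = V_0 ⊕ ⋯ ⊕ V_d and A* V_i ⊆ V_{i−1} + V_i + V_{i+1} for all i; V*_i is the θ*_i-eigenspace of A* with V = V*_0 ⊕ ⋯ ⊕ V*_d and A V*_i ⊆ V*_{i−1} + V*_i + V*_{i+1} for all i (where V_{−1} = V_{d+1} = V*_{−1} = V*_{d+1} = 0). Then there exist scalars β, γ, γ*, δ, δ* ∈ K such that [A, A²A* − β·A A* A + A* A² − γ·(A A* + A* A) − δ·A*] = 0 and [A*, A*²A − β·A* A A* + A A*² − γ*·(A* A + A A*) − δ*·A] = 0, where [X,Y] = XY − YX denotes the commutator of linear maps. -/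
lemma key_alg {K : Type*} [Field K] (q : K) (hq : q ≠ 0) (d : ℕ) (α b c : K) (θ : ℕ → K)
    (hθ : ∀ j, j ≤ d → θ j = α + b * q ^ (2 * (j : ℤ) - (d : ℤ)) + c * q ^ ((d : ℤ) - 2 * (j : ℤ)))
    (i : ℕ) (hi : i + 1 ≤ d) :
    θ (i+1) ^ 2 - (q ^ 2 + (q⁻¹) ^ 2) * θ (i+1) * θ i + θ i ^ 2
      - (α * (2 - (q ^ 2 + (q⁻¹) ^ 2))) * (θ (i+1) + θ i)
      - ((2 - (q ^ 2 + (q⁻¹) ^ 2)) * (b * c * (2 + (q ^ 2 + (q⁻¹) ^ 2)) - α ^ 2)) = 0 := by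
  rw [hθ i (Nat.le_of_succ_le hi), hθ (i+1) hi]
  have h1 : q ^ (2 * ((i : ℕ) + 1 : ℤ) - (d : ℤ)) = q ^ 2 * q ^ (2 * (i : ℤ) - (d : ℤ)) := by
    rw [← zpow_natCast q 2, ← zpow_add₀ hq]; ring_nf
  have h2 : q ^ ((d : ℤ) - 2 * ((i : ℕ) + 1 : ℤ)) = (q⁻¹) ^ 2 * q ^ ((d : ℤ) - 2 * (i : ℤ)) := by
    rw [inv_pow, ← zpow_natCast q 2, ← zpow_neg, ← zpow_add₀ hq]; ring_nf
  have huw : q ^ (2 * (i : ℤ) - (d : ℤ)) * q ^ ((d : ℤ) - 2 * (i : ℤ)) = 1 := by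
    rw [← zpow_add₀ hq]; norm_num
  have hp : q * q⁻¹ = 1 := mul_inv_cancel₀ hq
  push_cast
  rw [h1, h2]
  linear_combination ((q * q⁻¹ + 1) * (2 * b * c - b ^ 2 * (q ^ (2 * (i : ℤ) - (d : ℤ))) ^ 2
      - c ^ 2 * (q ^ ((d : ℤ) - 2 * (i : ℤ))) ^ 2)) * hp
    + (b * c * (2 - q ^ 4 - (q⁻¹) ^ 4)) * huw

lemma tri_comm {K V : Type*} [Field K] [AddCommGroup V] [Module K V]
    (d : ℕ) (A As : Module.End K V) (θ : ℕ → K) (β γ δ : K)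
    (hsum : DirectSum.IsInternal (fun i : Fin (d + 1) => Module.End.eigenspace A (θ i.1)))
    (htri : ∀ i, i ≤ d → Submodule.map As (Module.End.eigenspace A (θ i)) ≤
      (if i = 0 then ⊥ else Module.End.eigenspace A (θ (i - 1)))
        ⊔ Module.End.eigenspace A (θ i)
        ⊔ (if i = d then ⊥ else Module.End.eigenspace A (θ (i + 1))))
    (hkey : ∀ i, i + 1 ≤ d →
      θ (i+1) ^ 2 - β * θ (i+1) * θ i + θ i ^ 2 - γ * (θ (i+1) + θ i) - δ = 0) :
    A * (A ^ 2 * As - β • (A * As * A) + As * A ^ 2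
          - γ • (A * As + As * A) - δ • As)
      - (A ^ 2 * As - β • (A * As * A) + As * A ^ 2
          - γ • (A * As + As * A) - δ • As) * A = 0 := by
  set C : Module.End K V := A ^ 2 * As - β • (A * As * A) + As * A ^ 2
      - γ • (A * As + As * A) - δ • As with hCdef
  have hC : ∀ i, i ≤ d → ∀ v ∈ Module.End.eigenspace A (θ i),
      C v ∈ Module.End.eigenspace A (θ i) := by
    intro i hi v hv
    have hAv : A v = θ i • v := Module.End.mem_eigenspace_iff.mp hv
    obtain ⟨y, hy, w3, hw3, hysum⟩ := Submodule.mem_sup.mp (htri i hi ⟨v, hv, rfl⟩)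
    obtain ⟨w1, hw1, w2, hw2, hysum'⟩ := Submodule.mem_sup.mp hy
    have hAsv : As v = w1 + w2 + w3 := by rw [← hysum, ← hysum']
    have hQ : ∀ (t : K) (w : V), A w = t • w →
        A (A w) - (β * θ i + γ) • A w + (θ i ^ 2 - γ * θ i - δ) • w
          = (t ^ 2 - β * t * θ i + θ i ^ 2 - γ * (t + θ i) - δ) • w := by
      intro t w hw
      rw [hw, map_smul, hw, smul_smul]
      module
    have hCv : C v = (A (A (As v)) - (β * θ i + γ) • A (As v)
        + (θ i ^ 2 - γ * θ i - δ) • (As v)) := by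
      simp only [hCdef, LinearMap.sub_apply, LinearMap.add_apply, LinearMap.smul_apply,
        Module.End.mul_apply, pow_two, hAv, map_smul]
      module
    have e2 : A (A w2) - (β * θ i + γ) • A w2 + (θ i ^ 2 - γ * θ i - δ) • w2
        = (θ i ^ 2 - β * θ i * θ i + θ i ^ 2 - γ * (θ i + θ i) - δ) • w2 :=
      hQ _ _ (Module.End.mem_eigenspace_iff.mp hw2)
    have e1 : A (A w1) - (β * θ i + γ) • A w1 + (θ i ^ 2 - γ * θ i - δ) • w1 = 0 := by
      by_cases h0 : i = 0
      · rw [h0] at hw1; simp only [if_pos rfl, Submodule.mem_bot] at hw1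
        rw [hw1]; simp
      · rw [if_neg h0] at hw1
        rw [hQ _ _ (Module.End.mem_eigenspace_iff.mp hw1)]
        have hii : i - 1 + 1 = i := Nat.succ_pred_eq_of_pos (Nat.pos_of_ne_zero h0)
        have := hkey (i - 1) (by omega)
        rw [hii] at this
        rw [show θ (i-1) ^ 2 - β * θ (i-1) * θ i + θ i ^ 2 - γ * (θ (i-1) + θ i) - δ = 0 by
          linear_combination this]
        simp
    have e3 : A (A w3) - (β * θ i + γ) • A w3 + (θ i ^ 2 - γ * θ i - δ) • w3 = 0 := by
      by_cases hd : i = d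
      · rw [hd] at hw3; simp only [if_pos rfl, Submodule.mem_bot] at hw3
        rw [hw3]; simp
      · rw [if_neg hd] at hw3
        rw [hQ _ _ (Module.End.mem_eigenspace_iff.mp hw3)]
        rw [hkey i (by omega)]
        simp
    have : C v = (θ i ^ 2 - β * θ i * θ i + θ i ^ 2 - γ * (θ i + θ i) - δ) • w2 := by
      rw [hCv, hAsv]
      simp only [map_add, smul_add]
      linear_combination (norm := module) e1 + e2 + e3
    rw [this]
    exact Submodule.smul_mem _ _ hw2
  ext v
  have hv : v ∈ (⊤ : Submodule K V) := Submodule.mem_top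
  rw [← hsum.submodule_iSup_eq_top] at hv
  simp only [LinearMap.sub_apply, Module.End.mul_apply, LinearMap.zero_apply]
  refine Submodule.iSup_induction _ (motive := fun v => A (C v) - C (A v) = 0) hv ?_ (by simp) ?_
  · rintro ⟨i, hilt⟩ w hw
    have hi : i ≤ d := Nat.lt_succ_iff.mp hilt
    have h1 : A (C w) = θ i • C w := Module.End.mem_eigenspace_iff.mp (hC i hi w hw)
    have h2 : A w = θ i • w := Module.End.mem_eigenspace_iff.mp hw
    rw [h1, h2, map_smul, sub_self]
  · intro x y hx hy
    rw [sub_eq_zero] at hx hy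
    simp only [map_add, hx, hy]
    rw [sub_self]

/-- A tridiagonal pair of q-Racah type satisfies the tridiagonal relations. -/
theorem stmt3 (K V : Type*) [Field K] [AddCommGroup V] [Module K V] [FiniteDimensional K V]
    (q : K) (hq : q ≠ 0) (hqroot : ∀ n : ℕ, 0 < n → q ^ n ≠ 1)
    (d : ℕ) (A Astar : Module.End K V)
    (α αs b c bs cs : K) (hb : b ≠ 0) (hc : c ≠ 0) (hbs : bs ≠ 0) (hcs : cs ≠ 0)
    (θ θs : ℕ → K)
    (hθ : ∀ i, i ≤ d → θ i = α + b * q ^ (2 * (i : ℤ) - (d : ℤ)) + c * q ^ ((d : ℤ) - 2 * (i : ℤ)))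
    (hθs : ∀ i, i ≤ d → θs i = αs + bs * q ^ (2 * (i : ℤ) - (d : ℤ)) + cs * q ^ ((d : ℤ) - 2 * (i : ℤ)))
    (hdist : ∀ i, i ≤ d → ∀ j, j ≤ d → θ i = θ j → i = j)
    (hdists : ∀ i, i ≤ d → ∀ j, j ≤ d → θs i = θs j → i = j)
    (hsum : DirectSum.IsInternal (fun i : Fin (d + 1) => Module.End.eigenspace A (θ i.1)))
    (hsums : DirectSum.IsInternal (fun i : Fin (d + 1) => Module.End.eigenspace Astar (θs i.1)))
    (htri : ∀ i, i ≤ d → Submodule.map Astar (Module.End.eigenspace A (θ i)) ≤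
      (if i = 0 then ⊥ else Module.End.eigenspace A (θ (i - 1)))
        ⊔ Module.End.eigenspace A (θ i)
        ⊔ (if i = d then ⊥ else Module.End.eigenspace A (θ (i + 1))))
    (htris : ∀ i, i ≤ d → Submodule.map A (Module.End.eigenspace Astar (θs i)) ≤
      (if i = 0 then ⊥ else Module.End.eigenspace Astar (θs (i - 1)))
        ⊔ Module.End.eigenspace Astar (θs i)
        ⊔ (if i = d then ⊥ else Module.End.eigenspace Astar (θs (i + 1)))) :
    ∃ β γ γs δ δs : K,
      A * (A ^ 2 * Astar - β • (A * Astar * A) + Astar * A ^ 2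
            - γ • (A * Astar + Astar * A) - δ • Astar)
        - (A ^ 2 * Astar - β • (A * Astar * A) + Astar * A ^ 2
            - γ • (A * Astar + Astar * A) - δ • Astar) * A = 0
      ∧ Astar * (Astar ^ 2 * A - β • (Astar * A * Astar) + A * Astar ^ 2
            - γs • (Astar * A + A * Astar) - δs • A)
        - (Astar ^ 2 * A - β • (Astar * A * Astar) + A * Astar ^ 2
            - γs • (Astar * A + A * Astar) - δs • A) * Astar = 0 := by
  refine ⟨q ^ 2 + (q⁻¹) ^ 2, α * (2 - (q ^ 2 + (q⁻¹) ^ 2)), αs * (2 - (q ^ 2 + (q⁻¹) ^ 2)),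
    (2 - (q ^ 2 + (q⁻¹) ^ 2)) * (b * c * (2 + (q ^ 2 + (q⁻¹) ^ 2)) - α ^ 2),
    (2 - (q ^ 2 + (q⁻¹) ^ 2)) * (bs * cs * (2 + (q ^ 2 + (q⁻¹) ^ 2)) - αs ^ 2), ?_, ?_⟩
  · exact tri_comm d A Astar θ _ _ _ hsum htri (fun i hi => key_alg q hq d α b c θ hθ i hi)
  · exact tri_comm d Astar A θs _ _ _ hsums htris (fun i hi => key_alg q hq d αs bs cs θs hθs i hi)
end

section
/- Let K be a field, q ∈ K a unit, α, b, c ∈ K, and d ≥ 0 an integer. Define θ_i := α + b·q^{2i−d} + c·q^{d−2i} for 0 ≤ i ≤ d, and for s ≥ 1 set β_s := q^{2s} + q^{−2s}, γ_s := −α(q^s − q^{−s})², δ_s := α²(q^s − q^{−s})² − bc(q^{2s} − q^{−2s})². Then for every integer r ≥ 1 and all 0 ≤ i, j ≤ d with |i − j| ≤ r: (θ_i − θ_j) · ∏_{s=1}^{r} (θ_i² − β_s·θ_i·θ_j + θ_j² − γ_s·(θ_i + θ_j) − δ_s) = 0. -/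
lemma key_racah {K : Type*} [Field K] (U V Z α b c : K)
    (hU : U ≠ 0) (hV : V ≠ 0) (hZ : Z ≠ 0) (h : U = V * Z ^ 2) :
    (α + b * U + c * U⁻¹) ^ 2
      - (Z ^ 2 + (Z ^ 2)⁻¹) * (α + b * U + c * U⁻¹) * (α + b * V + c * V⁻¹)
      + (α + b * V + c * V⁻¹) ^ 2
      - (-α * (Z - Z⁻¹) ^ 2) * ((α + b * U + c * U⁻¹) + (α + b * V + c * V⁻¹))
      - (α ^ 2 * (Z - Z⁻¹) ^ 2 - b * c * (Z ^ 2 - (Z ^ 2)⁻¹) ^ 2) = 0 := by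
  have hvw : V * V⁻¹ = 1 := mul_inv_cancel₀ hV
  have hzy : Z * Z⁻¹ = 1 := mul_inv_cancel₀ hZ
  rw [h, mul_inv, ← inv_pow]
  linear_combination ((2:K)*b*c + (-1)*Z⁻¹^4*b*c + (-1)*Z^4*b*c) * hvw
    + ((-2:K)*b*c + (-2)*α^2 + (-2)*Z*Z⁻¹*b*c + (-2)*V⁻¹*α*c + (-2)*V⁻¹*Z⁻¹^2*α*c
      + (-1)*V⁻¹^2*c^2 + (-1)*V⁻¹^2*Z*Z⁻¹*c^2 + (-2)*V*α*b + (-2)*V*Z^2*α*b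
      + (-1)*V^2*b^2 + (-1)*V^2*Z*Z⁻¹*b^2) * hzy

/-- The polynomial `p_r(x,y) = (x-y) ∏_{s=1}^r (x² - β_s xy + y² - γ_s(x+y) - δ_s)`
with `β_s = q^{2s}+q^{-2s}`, `γ_s = -α(q^s-q^{-s})²`,
`δ_s = α²(q^s-q^{-s})² - bc(q^{2s}-q^{-2s})²` vanishes at pairs of q-Racah
eigenvalues `θ_i, θ_j` with `|i-j| ≤ r`. -/
theorem stmt4 (K : Type*) [Field K] (q : K) (hq : q ≠ 0)
    (α b c : K) (d : ℕ) (θ : ℕ → K)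
    (hθ : ∀ i, i ≤ d → θ i = α + b * q ^ (2 * (i : ℤ) - (d : ℤ)) + c * q ^ ((d : ℤ) - 2 * (i : ℤ)))
    (β γ δ : ℕ → K)
    (hβ : ∀ s : ℕ, 1 ≤ s → β s = q ^ (2 * (s : ℤ)) + q ^ (-(2 * (s : ℤ))))
    (hγ : ∀ s : ℕ, 1 ≤ s → γ s = - α * (q ^ (s : ℤ) - q ^ (-(s : ℤ))) ^ 2)
    (hδ : ∀ s : ℕ, 1 ≤ s → δ s = α ^ 2 * (q ^ (s : ℤ) - q ^ (-(s : ℤ))) ^ 2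
      - b * c * (q ^ (2 * (s : ℤ)) - q ^ (-(2 * (s : ℤ)))) ^ 2) :
    ∀ r : ℕ, 1 ≤ r → ∀ i j : ℕ, i ≤ d → j ≤ d → ((i : ℤ) - (j : ℤ)).natAbs ≤ r →
      (θ i - θ j) * ∏ s ∈ Finset.Icc 1 r,
        (θ i ^ 2 - β s * θ i * θ j + θ j ^ 2 - γ s * (θ i + θ j) - δ s) = 0 := by
  intro r hr i j hi hj habs
  by_cases hij : i = j
  · subst hij; simp
  · -- the factor at s₀ = |i - j| vanishes
    set s₀ : ℕ := ((i : ℤ) - (j : ℤ)).natAbs with hs₀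
    have hs₀pos : 1 ≤ s₀ := by
      rw [hs₀, Nat.one_le_iff_ne_zero, Int.natAbs_ne_zero, sub_ne_zero]
      exact_mod_cast hij
    apply mul_eq_zero_of_right
    apply Finset.prod_eq_zero (Finset.mem_Icc.mpr ⟨hs₀pos, habs⟩)
    rw [hθ i hi, hθ j hj, hβ s₀ hs₀pos, hγ s₀ hs₀pos, hδ s₀ hs₀pos]
    -- rewrite exponents
    have hU : q ^ (2 * (i : ℤ) - (d : ℤ)) ≠ 0 := zpow_ne_zero _ hq
    have hV : q ^ (2 * (j : ℤ) - (d : ℤ)) ≠ 0 := zpow_ne_zero _ hq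
    have hZ : q ^ ((s₀ : ℤ)) ≠ 0 := zpow_ne_zero _ hq
    have e1 : q ^ ((d : ℤ) - 2 * (i : ℤ)) = (q ^ (2 * (i : ℤ) - (d : ℤ)))⁻¹ := by
      rw [← zpow_neg]; ring_nf
    have e2 : q ^ ((d : ℤ) - 2 * (j : ℤ)) = (q ^ (2 * (j : ℤ) - (d : ℤ)))⁻¹ := by
      rw [← zpow_neg]; ring_nf
    have e3 : q ^ (2 * (s₀ : ℤ)) = (q ^ ((s₀ : ℤ))) ^ 2 := by
      rw [← zpow_natCast (q ^ ((s₀ : ℤ))) 2, ← zpow_mul]; ring_nf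
    have e4 : q ^ (-(2 * (s₀ : ℤ))) = ((q ^ ((s₀ : ℤ))) ^ 2)⁻¹ := by
      rw [← e3, ← zpow_neg]
    have e5 : q ^ (-(s₀ : ℤ)) = (q ^ ((s₀ : ℤ)))⁻¹ := by rw [← zpow_neg]
    rw [e1, e2, e3, e4, e5]
    rcases Int.natAbs_eq ((i : ℤ) - (j : ℤ)) with h | h
    · -- i - j = s₀ : U = V * Z^2
      have hUV : q ^ (2 * (i : ℤ) - (d : ℤ))
          = q ^ (2 * (j : ℤ) - (d : ℤ)) * (q ^ ((s₀ : ℤ))) ^ 2 := by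
        rw [← zpow_natCast (q ^ ((s₀ : ℤ))) 2, ← zpow_mul, ← zpow_add₀ hq]
        congr 1
        omega
      have := key_racah (q ^ (2 * (i : ℤ) - (d : ℤ))) (q ^ (2 * (j : ℤ) - (d : ℤ)))
        (q ^ ((s₀ : ℤ))) α b c hU hV hZ hUV
      linear_combination this
    · -- j - i = s₀ : V = U * Z^2, use symmetry
      have hUV : q ^ (2 * (j : ℤ) - (d : ℤ))
          = q ^ (2 * (i : ℤ) - (d : ℤ)) * (q ^ ((s₀ : ℤ))) ^ 2 := by
        rw [← zpow_natCast (q ^ ((s₀ : ℤ))) 2, ← zpow_mul, ← zpow_add₀ hq]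
        congr 1
        omega
      have := key_racah (q ^ (2 * (j : ℤ) - (d : ℤ))) (q ^ (2 * (i : ℤ) - (d : ℤ)))
        (q ^ ((s₀ : ℤ))) α b c hV hU hZ hUV
      linear_combination this
end

section
/- Let K be a field, V a finite-dimensional K-vector space, d ≥ 0, and A, A* : V → V linear maps. Suppose θ_0, …, θ_d ∈ K are pairwise distinct, V_i is the θ_i-eigenspace of A, V = V_0 ⊕ ⋯ ⊕ V_d, and A* V_i ⊆ V_{i−1} + V_i + V_{i+1} for all 0 ≤ i ≤ d (with V_{−1} = V_{d+1} = 0). Fix an integer r ≥ 1 and scalars β_s, γ_s, δ_s ∈ K (1 ≤ s ≤ r) such that θ_i² − β_s·θ_i·θ_j + θ_j² − γ_s·(θ_i + θ_j) − δ_s = 0 for all 0 ≤ i, j ≤ d with |i − j| = s. Then for any family of scalars (a_{ij})_{i,j ≥ 0, i+j ≤ 2r+1} in K satisfying Σ_{i+j ≤ 2r+1} a_{ij}·x^i·y^j = (x − y)·∏_{s=1}^{r}(x² − β_s·xy + y² − γ_s·(x+y) − δ_s) for all x, y ∈ K, one has Σ_{i+j ≤ 2r+1} a_{ij} · A^i ∘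 (A*)^r ∘ A^j = 0 as a linear map on V. -/
section Aux

variable {K V : Type*} [Field K] [AddCommGroup V] [Module K V]

/-- The "band" submodule: sum of eigenspaces at distance at most `m` from `j`. -/
private def bandW (E : ℕ → Submodule K V) (d m j : ℕ) : Submodule K V :=
  (Finset.range (d + 1)).sup
    (fun k => if ((k : ℤ) - (j : ℤ)).natAbs ≤ m then E k else ⊥)

private lemma le_bandW (E : ℕ → Submodule K V) (d m j k : ℕ) (hk : k ≤ d)
    (h : ((k : ℤ) - (j : ℤ)).natAbs ≤ m) : E k ≤ bandW E d m j := by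
  have hle := Finset.le_sup
    (f := fun (k : ℕ) => if ((k : ℤ) - (j : ℤ)).natAbs ≤ m then E k else ⊥)
    (Finset.mem_range.mpr (by omega : k < d + 1))
  simpa [h, bandW] using hle

private lemma bandW_le (E : ℕ → Submodule K V) (d m j : ℕ) (P : Submodule K V)
    (h : ∀ k, k ≤ d → ((k : ℤ) - (j : ℤ)).natAbs ≤ m → E k ≤ P) :
    bandW E d m j ≤ P := by
  apply Finset.sup_le
  intro k hk
  rw [Finset.mem_range] at hk
  by_cases hm : ((k : ℤ) - (j : ℤ)).natAbs ≤ m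
  · rw [if_pos hm]; exact h k (by omega) hm
  · rw [if_neg hm]; exact bot_le

private lemma pow_apply_eig (A : Module.End K V) (μ : K) (w : V)
    (hw : w ∈ Module.End.eigenspace A μ) (n : ℕ) : (A ^ n) w = μ ^ n • w := by
  rw [Module.End.mem_eigenspace_iff] at hw
  induction n with
  | zero => simp
  | succ n ih =>
      rw [pow_succ, Module.End.mul_apply, hw, map_smul, ih, smul_smul, pow_succ, mul_comm]

end Aux

/-- The r-th higher order tridiagonal relation: if `A` is diagonalizable with
pairwise distinct eigenvalues `θ 0, …, θ d`, `A*` satisfies the tridiagonal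
condition with respect to the eigenspaces of `A`, and the scalars `β_s, γ_s, δ_s`
annihilate pairs of eigenvalues at distance `s`, then any coefficient family
`a i j` (for `i + j ≤ 2r+1`) realizing the generating polynomial
`(x-y) ∏_{s=1}^r (x² - β_s xy + y² - γ_s (x+y) - δ_s)` gives
`Σ a i j A^i (A*)^r A^j = 0`. -/
theorem stmt5 (K V : Type*) [Field K] [AddCommGroup V] [Module K V] [FiniteDimensional K V]
    (d : ℕ) (A Astar : Module.End K V) (θ : ℕ → K)
    (hdist : ∀ i, i ≤ d → ∀ j, j ≤ d → θ i = θ j → i = j)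
    (hsum : DirectSum.IsInternal (fun i : Fin (d + 1) => Module.End.eigenspace A (θ i.1)))
    (htri : ∀ i, i ≤ d → Submodule.map Astar (Module.End.eigenspace A (θ i)) ≤
      (if i = 0 then ⊥ else Module.End.eigenspace A (θ (i - 1)))
        ⊔ Module.End.eigenspace A (θ i)
        ⊔ (if i = d then ⊥ else Module.End.eigenspace A (θ (i + 1))))
    (r : ℕ) (hr : 1 ≤ r) (β γ δ : ℕ → K)
    (hrel : ∀ s : ℕ, 1 ≤ s → s ≤ r → ∀ i, i ≤ d → ∀ j, j ≤ d →
      ((i : ℤ) - (j : ℤ)).natAbs = s →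
      θ i ^ 2 - β s * θ i * θ j + θ j ^ 2 - γ s * (θ i + θ j) - δ s = 0)
    (a : ℕ → ℕ → K)
    (ha : ∀ x y : K,
      ∑ i ∈ Finset.range (2 * r + 2), ∑ j ∈ Finset.range (2 * r + 2 - i),
          a i j * x ^ i * y ^ j
        = (x - y) * ∏ s ∈ Finset.Icc 1 r,
            (x ^ 2 - β s * x * y + y ^ 2 - γ s * (x + y) - δ s)) :
    ∑ i ∈ Finset.range (2 * r + 2), ∑ j ∈ Finset.range (2 * r + 2 - i),
      a i j • (A ^ i * Astar ^ r * A ^ j) = 0 := by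
  classical
  set E : ℕ → Submodule K V := fun k => Module.End.eigenspace A (θ k) with hE
  have hstep : ∀ m j, Submodule.map Astar (bandW E d m j) ≤ bandW E d (m + 1) j := by
    intro m j
    rw [Submodule.map_le_iff_le_comap]
    apply bandW_le
    intro k hk h
    rw [← Submodule.map_le_iff_le_comap]
    refine (htri k hk).trans ?_
    refine sup_le (sup_le ?_ ?_) ?_
    · by_cases hk0 : k = 0
      · simp [hk0]
      · rw [if_neg hk0]
        exact le_bandW E d (m + 1) j (k - 1) (by omega) (by omega)
    · exact le_bandW E d (m + 1) j k hk (by omega)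
    · by_cases hkd : k = d
      · simp [hkd]
      · rw [if_neg hkd]
        exact le_bandW E d (m + 1) j (k + 1) (by omega) (by omega)
  have hiter : ∀ j, j ≤ d → ∀ m, Submodule.map (Astar ^ m) (E j) ≤ bandW E d m j := by
    intro j hj m
    induction m with
    | zero =>
        rw [pow_zero, show (1 : Module.End K V) = LinearMap.id from rfl, Submodule.map_id]
        exact le_bandW E d 0 j j hj (by simp)
    | succ m ih =>
        have hcomp : Astar ^ (m + 1) = Astar ∘ₗ Astar ^ m := by
          rw [pow_succ']; rfl
        rw [hcomp, Submodule.map_comp]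
        exact (Submodule.map_mono ih).trans (hstep m j)
  -- reduce to eigenspaces
  rw [← LinearMap.ker_eq_top, eq_top_iff, ← hsum.submodule_iSup_eq_top, iSup_le_iff]
  intro i
  obtain ⟨j0, hj0'⟩ := i
  have hj0 : j0 ≤ d := Nat.lt_succ_iff.mp hj0'
  rw [SetLike.le_def]
  intro v hv
  have hv' : v ∈ E j0 := hv
  rw [LinearMap.mem_ker]
  -- the key operator
  set g : Module.End K V :=
    ∑ i ∈ Finset.range (2 * r + 2), ∑ j ∈ Finset.range (2 * r + 2 - i),
      (a i j * θ j0 ^ j) • A ^ i with hgdef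
  have hg : ∀ u : V, g u = ∑ i ∈ Finset.range (2 * r + 2),
      ∑ j ∈ Finset.range (2 * r + 2 - i), (a i j * θ j0 ^ j) • (A ^ i) u := by
    intro u
    rw [hgdef]
    simp [LinearMap.sum_apply, LinearMap.smul_apply]
  have hker : bandW E d r j0 ≤ LinearMap.ker g := by
    apply bandW_le
    intro k hk h
    rw [SetLike.le_def]
    intro u hu
    rw [LinearMap.mem_ker, hg]
    have heach : ∀ i ∈ Finset.range (2 * r + 2),
        ∑ j ∈ Finset.range (2 * r + 2 - i), (a i j * θ j0 ^ j) • (A ^ i) u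
          = (∑ j ∈ Finset.range (2 * r + 2 - i), a i j * θ k ^ i * θ j0 ^ j) • u := by
      intro i _
      rw [Finset.sum_smul]
      refine Finset.sum_congr rfl fun j _ => ?_
      rw [pow_apply_eig A (θ k) u hu i, smul_smul]
      ring_nf
    rw [Finset.sum_congr rfl heach, ← Finset.sum_smul, ha (θ k) (θ j0)]
    rcases eq_or_ne k j0 with hkj | hkj
    · rw [hkj, sub_self, zero_mul, zero_smul]
    · have hs1 : 1 ≤ ((k : ℤ) - (j0 : ℤ)).natAbs := by omega
      have hzero : ∏ s ∈ Finset.Icc 1 r,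
          (θ k ^ 2 - β s * θ k * θ j0 + θ j0 ^ 2 - γ s * (θ k + θ j0) - δ s) = 0 := by
        refine Finset.prod_eq_zero (Finset.mem_Icc.mpr ⟨hs1, h⟩) ?_
        exact hrel _ hs1 h k hk j0 hj0 rfl
      rw [hzero, mul_zero, zero_smul]
  -- compute the action on v
  have hw : (Astar ^ r) v ∈ bandW E d r j0 :=
    hiter j0 hj0 r (Submodule.mem_map_of_mem hv')
  have hgw := hker hw
  rw [LinearMap.mem_ker, hg] at hgw
  calc (∑ i ∈ Finset.range (2 * r + 2), ∑ j ∈ Finset.range (2 * r + 2 - i),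
        a i j • (A ^ i * Astar ^ r * A ^ j)) v
      = ∑ i ∈ Finset.range (2 * r + 2), ∑ j ∈ Finset.range (2 * r + 2 - i),
          (a i j * θ j0 ^ j) • (A ^ i) ((Astar ^ r) v) := by
        rw [LinearMap.sum_apply]
        refine Finset.sum_congr rfl fun i _ => ?_
        rw [LinearMap.sum_apply]
        refine Finset.sum_congr rfl fun j _ => ?_
        rw [LinearMap.smul_apply, Module.End.mul_apply, Module.End.mul_apply,
          pow_apply_eig A (θ j0) v hv' j, map_smul, map_smul, smul_smul, mul_comm]
    _ = 0 := hgw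
end

section
/- Let K be a field and q ∈ K a unit that is not a root of unity. Let V be a finite-dimensional K-vector space, d ≥ 0, and A, A* : V → V linear maps. Suppose θ_i = b·q^{2i−d} + c·q^{d−2i} (0 ≤ i ≤ d) are pairwise distinct, V_i is the θ_i-eigenspace of A, V = V_0 ⊕ ⋯ ⊕ V_d, and A* V_i ⊆ V_{i−1} + V_i + V_{i+1} for all i (with V_{−1} = V_{d+1} = 0). Then, with ρ₀ := −bc·(q² − q^{−2})² and [3]_q := q² + 1 + q^{−2}, the q-Dolan–Grady relation holds: A³A* − [3]_q·A²A*A + [3]_q·A A* A² − A*A³ = ρ₀·(A A* − A* A) as linear maps on V. -/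
private lemma qdg_scalar_up {K : Type*} [Field K] (q qi b c u ui : K)
    (hq : q * qi = 1) (hu : u * ui = 1) :
    (b*(u*q^2) + c*(ui*qi^2))^3
      - (q^2+1+qi^2) * (b*u + c*ui) * (b*(u*q^2) + c*(ui*qi^2))^2
      + (q^2+1+qi^2) * (b*u + c*ui)^2 * (b*(u*q^2) + c*(ui*qi^2))
      - (b*u + c*ui)^3
      - (-(b*c)*(q^2-qi^2)^2) * (b*(u*q^2) + c*(ui*qi^2))
      + (-(b*c)*(q^2-qi^2)^2) * (b*u + c*ui) = 0 := by
  linear_combination (c^3*ui^3 + (-1)*c^3*qi^2*ui^3 + c^3*q*qi*ui^3 + (-1)*c^3*q*qi^3*ui^3 + 2*b*c^2*ui + b*c^2*u*ui^2 + (-2)*b*c^2*qi^2*ui + 2*b*c^2*q*qi*ui + b*c^2*q*qi*u*ui^2 + (-2)*b*c^2*q*qi^3*ui + b*c^2*q^2*ui + (-2)*b*c^2*q^2*u*ui^2 + b*c^2*q^3*qi*ui + (-2)*b*c^2*q^3*qi*u*ui^2 + 2*b^2*c*u + b^2*c*u^2*ui + b^2*c*qi^2*u + (-2)*b^2*c*qi^2*u^2*ui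 + 2*b^2*c*q*qi*u + b^2*c*q*qi*u^2*ui + b^2*c*q*qi^3*u + (-2)*b^2*c*q*qi^3*u^2*ui + (-2)*b^2*c*q^2*u + (-2)*b^2*c*q^3*qi*u + b^3*u^3 + b^3*q*qi*u^3 + (-1)*b^3*q^2*u^3 + (-1)*b^3*q^3*qi*u^3) * hq + ((-2)*b*c^2*ui + 2*b*c^2*qi^2*ui + b*c^2*qi^4*ui + (-1)*b*c^2*qi^6*ui + (-1)*b*c^2*q^2*ui + b*c^2*q^4*ui + (-2)*b^2*c*u + (-1)*b^2*c*qi^2*u + b^2*c*qi^4*u + 2*b^2*c*q^2*u + b^2*c*q^4*u + (-1)*b^2*c*q^6*u) * hu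

private lemma qdg_scalar_down {K : Type*} [Field K] (q qi b c u ui : K)
    (hq : q * qi = 1) (hu : u * ui = 1) :
    (b*(u*qi^2) + c*(ui*q^2))^3
      - (q^2+1+qi^2) * (b*u + c*ui) * (b*(u*qi^2) + c*(ui*q^2))^2
      + (q^2+1+qi^2) * (b*u + c*ui)^2 * (b*(u*qi^2) + c*(ui*q^2))
      - (b*u + c*ui)^3
      - (-(b*c)*(q^2-qi^2)^2) * (b*(u*qi^2) + c*(ui*q^2))
      + (-(b*c)*(q^2-qi^2)^2) * (b*u + c*ui) = 0 := by
  linear_combination (c^3*ui^3 + c^3*q*qi*ui^3 + (-1)*c^3*q^2*ui^3 + (-1)*c^3*q^3*qi*ui^3 + 2*b*c^2*ui + b*c^2*u*ui^2 + b*c^2*qi^2*ui + (-2)*b*c^2*qi^2*u*ui^2 + 2*b*c^2*q*qi*ui + b*c^2*q*qi*u*ui^2 + b*c^2*q*qi^3*ui + (-2)*b*c^2*q*qi^3*u*ui^2 + (-2)*b*c^2*q^2*ui + (-2)*b*c^2*q^3*qi*ui + 2*b^2*c*u + b^2*c*u^2*ui + (-2)*b^2*c*qi^2*u + 2*b^2*c*q*qi*u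 + b^2*c*q*qi*u^2*ui + (-2)*b^2*c*q*qi^3*u + b^2*c*q^2*u + (-2)*b^2*c*q^2*u^2*ui + b^2*c*q^3*qi*u + (-2)*b^2*c*q^3*qi*u^2*ui + b^3*u^3 + (-1)*b^3*qi^2*u^3 + b^3*q*qi*u^3 + (-1)*b^3*q*qi^3*u^3) * hq + ((-2)*b*c^2*ui + (-1)*b*c^2*qi^2*ui + b*c^2*qi^4*ui + 2*b*c^2*q^2*ui + b*c^2*q^4*ui + (-1)*b*c^2*q^6*ui + (-2)*b^2*c*u + 2*b^2*c*qi^2*u + b^2*c*qi^4*u + (-1)*b^2*c*qi^6*u + (-1)*b^2*c*q^2*u + b^2*c*q^4*u) * hu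

/-- The q-Dolan–Grady relation for a tridiagonal pair of reduced q-Racah type:
if the eigenvalues of `A` are `θ i = b q^(2i-d) + c q^(d-2i)` and `A*` is
tridiagonal with respect to the eigenspaces of `A`, then
`A³A* - [3]_q A²A*A + [3]_q A A* A² - A*A³ = ρ₀ (A A* - A* A)` with
`ρ₀ = -bc (q² - q^{-2})²`. -/
theorem stmt6 (K V : Type*) [Field K] [AddCommGroup V] [Module K V] [FiniteDimensional K V]
    (q : K) (hq : q ≠ 0) (hqroot : ∀ n : ℕ, 0 < n → q ^ n ≠ 1)
    (d : ℕ) (A Astar : Module.End K V) (b c : K) (θ : ℕ → K)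
    (hθ : ∀ i, i ≤ d → θ i = b * q ^ (2 * (i : ℤ) - (d : ℤ)) + c * q ^ ((d : ℤ) - 2 * (i : ℤ)))
    (hdist : ∀ i, i ≤ d → ∀ j, j ≤ d → θ i = θ j → i = j)
    (hsum : DirectSum.IsInternal (fun i : Fin (d + 1) => Module.End.eigenspace A (θ i.1)))
    (htri : ∀ i, i ≤ d → Submodule.map Astar (Module.End.eigenspace A (θ i)) ≤
      (if i = 0 then ⊥ else Module.End.eigenspace A (θ (i - 1)))
        ⊔ Module.End.eigenspace A (θ i)
        ⊔ (if i = d then ⊥ else Module.End.eigenspace A (θ (i + 1)))) :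
    A ^ 3 * Astar - (q ^ 2 + 1 + q⁻¹ ^ 2) • (A ^ 2 * Astar * A)
        + (q ^ 2 + 1 + q⁻¹ ^ 2) • (A * Astar * A ^ 2) - Astar * A ^ 3
      = (- (b * c) * (q ^ 2 - q⁻¹ ^ 2) ^ 2) • (A * Astar - Astar * A) := by
  set s : K := q ^ 2 + 1 + q⁻¹ ^ 2 with hs
  set ρ : K := - (b * c) * (q ^ 2 - q⁻¹ ^ 2) ^ 2 with hρ
  set L : Module.End K V :=
    A ^ 3 * Astar - s • (A ^ 2 * Astar * A) + s • (A * Astar * A ^ 2) - Astar * A ^ 3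
      - ρ • (A * Astar - Astar * A) with hL
  set g : K → K → K := fun t μ =>
    μ ^ 3 - s * t * μ ^ 2 + s * t ^ 2 * μ - t ^ 3 - ρ * μ + ρ * t with hg
  have gself : ∀ t : K, g t t = 0 := by intro t; simp only [hg]; ring
  have gup : ∀ i, i < d → g (θ i) (θ (i + 1)) = 0 := by
    intro i hid
    have hu : q ^ (2 * (i : ℤ) - (d : ℤ)) ≠ 0 := zpow_ne_zero _ hq
    have e1 : θ i = b * q ^ (2 * (i : ℤ) - (d : ℤ)) + c * (q ^ (2 * (i : ℤ) - (d : ℤ)))⁻¹ := by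
      rw [hθ i hid.le, ← zpow_neg]; ring_nf
    have e2 : θ (i + 1) = b * (q ^ (2 * (i : ℤ) - (d : ℤ)) * q ^ 2)
        + c * ((q ^ (2 * (i : ℤ) - (d : ℤ)))⁻¹ * q⁻¹ ^ 2) := by
      rw [hθ (i + 1) hid]
      push_cast
      rw [show 2 * ((i : ℤ) + 1) - (d : ℤ) = (2 * (i : ℤ) - (d : ℤ)) + 2 by ring,
        show (d : ℤ) - 2 * ((i : ℤ) + 1) = -(2 * (i : ℤ) - (d : ℤ)) + -2 by ring,
        zpow_add₀ hq, zpow_add₀ hq, zpow_neg, zpow_neg]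
      norm_num [inv_pow, zpow_ofNat]
    have key := qdg_scalar_up q q⁻¹ b c (q ^ (2 * (i : ℤ) - (d : ℤ)))
      (q ^ (2 * (i : ℤ) - (d : ℤ)))⁻¹ (mul_inv_cancel₀ hq) (mul_inv_cancel₀ hu)
    simp only [hg, hs, hρ]
    rw [e1, e2]
    linear_combination key
  have gdown : ∀ i, 0 < i → i ≤ d → g (θ i) (θ (i - 1)) = 0 := by
    intro i hi0 hid
    have hu : q ^ (2 * (i : ℤ) - (d : ℤ)) ≠ 0 := zpow_ne_zero _ hq
    have e1 : θ i = b * q ^ (2 * (i : ℤ) - (d : ℤ)) + c * (q ^ (2 * (i : ℤ) - (d : ℤ)))⁻¹ := by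
      rw [hθ i hid, ← zpow_neg]; ring_nf
    have e2 : θ (i - 1) = b * (q ^ (2 * (i : ℤ) - (d : ℤ)) * q⁻¹ ^ 2)
        + c * ((q ^ (2 * (i : ℤ) - (d : ℤ)))⁻¹ * q ^ 2) := by
      rw [hθ (i - 1) (le_trans (Nat.sub_le _ _) hid), Nat.cast_sub hi0]
      push_cast
      rw [show 2 * ((i : ℤ) - 1) - (d : ℤ) = (2 * (i : ℤ) - (d : ℤ)) + -2 by ring,
        show (d : ℤ) - 2 * ((i : ℤ) - 1) = -(2 * (i : ℤ) - (d : ℤ)) + 2 by ring,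
        zpow_add₀ hq, zpow_add₀ hq, zpow_neg, zpow_neg]
      norm_num [inv_pow, zpow_ofNat]
    have key := qdg_scalar_down q q⁻¹ b c (q ^ (2 * (i : ℤ) - (d : ℤ)))
      (q ^ (2 * (i : ℤ) - (d : ℤ)))⁻¹ (mul_inv_cancel₀ hq) (mul_inv_cancel₀ hu)
    simp only [hg, hs, hρ]
    rw [e1, e2]
    linear_combination key
  have hpow : ∀ (μ : K) (w : V), A w = μ • w → ∀ n : ℕ, (A ^ n) w = μ ^ n • w := by
    intro μ w h n
    induction n with
    | zero => simp
    | succ n ih =>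
      rw [pow_succ, Module.End.mul_apply, h, map_smul, ih, smul_smul, pow_succ, mul_comm]
  have key : ∀ i : Fin (d + 1), Module.End.eigenspace A (θ i.1) ≤ LinearMap.ker L := by
    intro i v hv
    have hid : (i : ℕ) ≤ d := Nat.lt_succ_iff.mp i.2
    have hAv : A v = θ i.1 • v := Module.End.mem_eigenspace_iff.mp hv
    have hmem := htri i.1 hid (Submodule.mem_map_of_mem hv)
    obtain ⟨y, hy, w3, hw3, hdec1⟩ := Submodule.mem_sup.mp hmem
    obtain ⟨w1, hw1, w2, hw2, hdec2⟩ := Submodule.mem_sup.mp hy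
    have H1 : ∃ μ : K, A w1 = μ • w1 ∧ g (θ i.1) μ = 0 := by
      by_cases h0 : (i : ℕ) = 0
      · rw [h0, if_pos rfl, Submodule.mem_bot] at hw1
        exact ⟨θ i.1, by simp [hw1], gself _⟩
      · rw [if_neg h0] at hw1
        exact ⟨θ ((i : ℕ) - 1), Module.End.mem_eigenspace_iff.mp hw1,
          gdown i.1 (Nat.pos_of_ne_zero h0) hid⟩
    have H3 : ∃ μ : K, A w3 = μ • w3 ∧ g (θ i.1) μ = 0 := by
      by_cases h0 : (i : ℕ) = d
      · rw [h0, if_pos rfl, Submodule.mem_bot] at hw3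
        exact ⟨θ i.1, by simp [hw3], gself _⟩
      · rw [if_neg h0] at hw3
        exact ⟨θ ((i : ℕ) + 1), Module.End.mem_eigenspace_iff.mp hw3,
          gup i.1 (lt_of_le_of_ne hid h0)⟩
    obtain ⟨μ1, hμ1, hgμ1⟩ := H1
    obtain ⟨μ3, hμ3, hgμ3⟩ := H3
    have hμ2 : A w2 = θ i.1 • w2 := Module.End.mem_eigenspace_iff.mp hw2
    have hdec : Astar v = w1 + w2 + w3 := by rw [← hdec1, ← hdec2]
    have expand : L v = g (θ i.1) μ1 • w1 + g (θ i.1) (θ i.1) • w2 + g (θ i.1) μ3 • w3 := by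
      have hA2 : (A ^ 2) v = (θ i.1) ^ 2 • v := hpow _ _ hAv 2
      have hA3w : ∀ (μ : K) (w : V), A w = μ • w → (A ^ 3) w = μ ^ 3 • w :=
        fun μ w h => hpow μ w h 3
      simp only [hL, LinearMap.sub_apply, LinearMap.add_apply, LinearMap.smul_apply,
        Module.End.mul_apply, hAv, hA2, map_smul, hdec, map_add,
        hμ1, hμ2, hμ3, hA3w _ _ hμ1, hA3w _ _ hμ2, hA3w _ _ hμ3, hA3w _ _ hAv,
        hpow _ _ hμ1 2, hpow _ _ hμ2 2, hpow _ _ hμ3 2, hg]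
      module
    rw [LinearMap.mem_ker, expand, hgμ1, gself, hgμ3, zero_smul, zero_smul, zero_smul,
      add_zero, add_zero]
  have hker : LinearMap.ker L = ⊤ := by
    rw [eq_top_iff, ← hsum.submodule_iSup_eq_top]
    exact iSup_le key
  have hL0 : L = 0 := LinearMap.ker_eq_top.mp hker
  have h2 : A ^ 3 * Astar - s • (A ^ 2 * Astar * A) + s • (A * Astar * A ^ 2) - Astar * A ^ 3
      - ρ • (A * Astar - Astar * A) = 0 := hL0
  exact sub_eq_zero.mp h2
end

section
/- Let K be a field and q ∈ K a unit that is not a root of unity. Define [n]_q := (q^n − q^{−n})/(q − q^{−1}), [n]_q! := ∏_{l=1}^{n}[l]_q, and the q-binomial [n choose m]_q := [n]_q!/([m]_q!·[n−m]_q!). Then for every integer r ≥ 1 and all x, y ∈ K: (x − y)·∏_{s=1}^{r}(x² − (q^{2s} + q^{−2s})·xy + y²) = Σ_{j=0}^{2r+1} (−1)^j·[2r+1 choose j]_q·x^{2r+1−j}·y^j. -/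
/-- The q-integer `[n]_q = (q^n - q^{-n})/(q - q^{-1})`. -/
def qInt {K : Type*} [Field K] (q : K) (n : ℕ) : K :=
  (q ^ n - q⁻¹ ^ n) / (q - q⁻¹)

/-- The q-factorial `[n]_q! = ∏_{l=1}^n [l]_q`. -/
def qFact {K : Type*} [Field K] (q : K) (n : ℕ) : K :=
  ∏ l ∈ Finset.Icc 1 n, qInt q l

/-- The q-binomial coefficient `[n choose m]_q = [n]_q!/([m]_q! [n-m]_q!)`. -/
def qBinom {K : Type*} [Field K] (q : K) (n m : ℕ) : K :=
  qFact q n / (qFact q m * qFact q (n - m))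

set_option linter.unusedSectionVars false

section aux
variable {K : Type*} [Field K] (q : K) (hq : q ≠ 0)
    (hqroot : ∀ n : ℕ, 0 < n → q ^ n ≠ 1)

include hq hqroot in
lemma qsub_ne : q - q⁻¹ ≠ 0 := by
  intro h
  apply hqroot 2 (by norm_num)
  have : q = q⁻¹ := sub_eq_zero.mp h
  calc q ^ 2 = q * q := sq q
    _ = q * q⁻¹ := by rw [← this]
    _ = 1 := mul_inv_cancel₀ hq

include hq hqroot in
lemma qInt_ne (n : ℕ) (hn : 0 < n) : qInt q n ≠ 0 := by
  unfold qInt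
  apply div_ne_zero _ (qsub_ne q hq hqroot)
  intro h
  apply hqroot (2 * n) (by omega)
  have h1 : q ^ n = q⁻¹ ^ n := sub_eq_zero.mp h
  calc q ^ (2 * n) = q ^ n * q ^ n := by rw [two_mul, pow_add]
    _ = q ^ n * q⁻¹ ^ n := by rw [← h1]
    _ = 1 := by rw [← mul_pow, mul_inv_cancel₀ hq, one_pow]

include hq hqroot in
lemma qFact_ne (n : ℕ) : qFact q n ≠ 0 := by
  unfold qFact
  apply Finset.prod_ne_zero_iff.mpr
  intro l hl
  exact qInt_ne q hq hqroot l (by simp at hl; omega)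

lemma qFact_succ (n : ℕ) : qFact q (n + 1) = qFact q n * qInt q (n + 1) := by
  unfold qFact
  rw [Finset.prod_Icc_succ_top (by omega)]

lemma qFact_zero : qFact q 0 = 1 := by
  unfold qFact
  simp

include hq hqroot in
lemma qBinom_zero (n : ℕ) : qBinom q n 0 = 1 := by
  unfold qBinom
  rw [qFact_zero, Nat.sub_zero, one_mul, div_self (qFact_ne q hq hqroot n)]

include hq hqroot in
lemma qBinom_self (n : ℕ) : qBinom q n n = 1 := by
  unfold qBinom
  rw [Nat.sub_self, qFact_zero, mul_one, div_self (qFact_ne q hq hqroot n)]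

include hq hqroot in
lemma qInt_rec (j d : ℕ) :
    qInt q (j + d + 2) = q⁻¹ ^ (j + 1) * qInt q (d + 1) + q ^ (d + 1) * qInt q (j + 1) := by
  have key : q ^ (j + d + 2) - q⁻¹ ^ (j + d + 2)
      = q⁻¹ ^ (j + 1) * (q ^ (d + 1) - q⁻¹ ^ (d + 1))
        + q ^ (d + 1) * (q ^ (j + 1) - q⁻¹ ^ (j + 1)) := by
    field_simp
    ring
  unfold qInt
  rw [mul_div_assoc', mul_div_assoc', ← add_div, key]

end aux

section pascal
variable {K : Type*} [Field K] (q : K) (hq : q ≠ 0)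
    (hqroot : ∀ n : ℕ, 0 < n → q ^ n ≠ 1)

include hq hqroot in
lemma qPascal (n j : ℕ) (hj : j < n) :
    qBinom q (n + 1) (j + 1)
      = q⁻¹ ^ (j + 1) * qBinom q n (j + 1) + q ^ (n - j) * qBinom q n j := by
  obtain ⟨d, rfl⟩ : ∃ d, n = j + d + 1 := ⟨n - j - 1, by omega⟩
  unfold qBinom
  have e1 : j + d + 1 + 1 - (j + 1) = d + 1 := by omega
  have e2 : j + d + 1 - (j + 1) = d := by omega
  have e3 : j + d + 1 - j = d + 1 := by omega
  rw [e1, e2, e3, qFact_succ, qFact_succ q d, qFact_succ q j,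
    show j + d + 1 + 1 = j + d + 2 from rfl, qInt_rec q hq hqroot j d]
  have Fn := qFact_ne q hq hqroot (j + d + 1)
  have Fj := qFact_ne q hq hqroot j
  have Fd := qFact_ne q hq hqroot d
  have Ij := qInt_ne q hq hqroot (j + 1) (by omega)
  have Id := qInt_ne q hq hqroot (d + 1) (by omega)
  have hD : qFact q j * qInt q (j + 1) * qFact q d ≠ 0 :=
    mul_ne_zero (mul_ne_zero Fj Ij) Fd
  have hE : qFact q j * (qFact q d * qInt q (d + 1)) ≠ 0 :=
    mul_ne_zero Fj (mul_ne_zero Fd Id)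
  have hBC : qFact q j * qInt q (j + 1) * (qFact q d * qInt q (d + 1)) ≠ 0 :=
    mul_ne_zero (mul_ne_zero Fj Ij) (mul_ne_zero Fd Id)
  rw [mul_div_assoc', mul_div_assoc', div_add_div _ _ hD hE, div_eq_div_iff hBC (mul_ne_zero hD hE)]
  ring

end pascal

section key
variable {K : Type*} [Field K] (q : K) (hq : q ≠ 0)
    (hqroot : ∀ n : ℕ, 0 < n → q ^ n ≠ 1)

include hq hqroot in
lemma key : ∀ n : ℕ, ∀ x y : K,
    ∑ j ∈ Finset.range (n + 1), (-1 : K) ^ j * qBinom q n j * x ^ (n - j) * y ^ j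
      = ∏ k ∈ Finset.range n, (x - q ^ n * q⁻¹ ^ (2 * k + 1) * y) := by
  intro n
  induction n with
  | zero =>
    intro x y
    simp [qBinom_zero q hq hqroot]
  | succ n ih =>
    intro x y
    rw [Finset.prod_range_succ']
    have hstep : ∀ k ∈ Finset.range n,
        x - q ^ (n + 1) * q⁻¹ ^ (2 * (k + 1) + 1) * y
          = x - q ^ n * q⁻¹ ^ (2 * k + 1) * (q⁻¹ * y) := by
      intro k _
      have h1 : q ^ (n + 1) * q⁻¹ ^ (2 * (k + 1) + 1)
          = q ^ n * q⁻¹ ^ (2 * k + 1) * q⁻¹ := by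
        rw [pow_succ, show 2 * (k + 1) + 1 = 2 * k + 1 + 2 from by ring, pow_add]
        field_simp
      rw [h1]; ring
    rw [Finset.prod_congr rfl hstep, ← ih x (q⁻¹ * y),
      show x - q ^ (n + 1) * q⁻¹ ^ (2 * 0 + 1) * y = x - q ^ n * y from by
        rw [pow_succ, mul_zero, zero_add, pow_one, mul_inv_cancel_right₀ hq]]
    rw [Finset.sum_range_succ' _ (n + 1), Finset.sum_range_succ, mul_sub,
      Finset.sum_mul, Finset.sum_mul, Finset.sum_range_succ' _ n,
      Finset.sum_range_succ _ n]
    have hmain : ∀ j ∈ Finset.range n,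
        (-1 : K) ^ (j + 1) * qBinom q (n + 1) (j + 1) * x ^ (n + 1 - (j + 1)) * y ^ (j + 1)
          = ((-1 : K) ^ (j + 1) * qBinom q n (j + 1) * x ^ (n - (j + 1)) * (q⁻¹ * y) ^ (j + 1)) * x
            - ((-1 : K) ^ j * qBinom q n j * x ^ (n - j) * (q⁻¹ * y) ^ j) * (q ^ n * y) := by
      intro j hj
      simp only [Finset.mem_range] at hj
      rw [qPascal q hq hqroot n j hj]
      obtain ⟨m, rfl⟩ : ∃ m, n = j + m + 1 := ⟨n - j - 1, by omega⟩
      rw [show j + m + 1 + 1 - (j + 1) = m + 1 from by omega,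
        show j + m + 1 - (j + 1) = m from by omega,
        show j + m + 1 - j = m + 1 from by omega]
      simp only [mul_pow, inv_pow]
      field_simp
      ring
    rw [Finset.sum_congr rfl hmain, Finset.sum_sub_distrib]
    rw [qBinom_zero q hq hqroot, qBinom_zero q hq hqroot,
      qBinom_self q hq hqroot, qBinom_self q hq hqroot]
    simp only [Nat.sub_self, Nat.sub_zero, pow_zero, mul_pow, inv_pow]
    linear_combination (-1 : K) ^ n * y ^ (n + 1) * inv_mul_cancel₀ (pow_ne_zero n hq)

end key

section final
variable {K : Type*} [Field K] (q : K) (hq : q ≠ 0)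
    (hqroot : ∀ n : ℕ, 0 < n → q ^ n ≠ 1)

include hq in
lemma prodLemma : ∀ r : ℕ, ∀ x y : K,
    ∏ k ∈ Finset.range (2 * r + 1), (x - q ^ (2 * r + 1) * q⁻¹ ^ (2 * k + 1) * y)
      = (x - y) * ∏ s ∈ Finset.Icc 1 r,
          (x ^ 2 - (q ^ (2 * s) + q⁻¹ ^ (2 * s)) * x * y + y ^ 2) := by
  intro r
  induction r with
  | zero =>
    intro x y
    simp
    field_simp
  | succ r ih =>
    intro x y
    rw [show 2 * (r + 1) + 1 = 2 * r + 1 + 1 + 1 from by ring,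
      Finset.prod_range_succ', Finset.prod_range_succ]
    have hfac : ∀ k ∈ Finset.range (2 * r + 1),
        x - q ^ (2 * r + 1 + 1 + 1) * q⁻¹ ^ (2 * (k + 1) + 1) * y
          = x - q ^ (2 * r + 1) * q⁻¹ ^ (2 * k + 1) * y := by
      intro k _
      congr 1
      rw [show 2 * (k + 1) + 1 = 2 * k + 1 + 2 from by ring, pow_add, pow_add, pow_add]
      simp only [inv_pow]
      field_simp
      ring
    have h1 : q ^ (2 * r + 1 + 1 + 1) * q⁻¹ ^ (2 * 0 + 1) = q ^ (2 * r + 2) := by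
      rw [pow_one, show 2 * r + 1 + 1 + 1 = 2 * r + 2 + 1 from by ring, pow_succ,
        mul_assoc, mul_inv_cancel₀ hq, mul_one]
    have h2 : q ^ (2 * r + 1 + 1 + 1) * q⁻¹ ^ (2 * (2 * r + 1 + 1) + 1) = q⁻¹ ^ (2 * r + 2) := by
      rw [show 2 * (2 * r + 1 + 1) + 1 = (2 * r + 1 + 1 + 1) + (2 * r + 2) from by ring,
        pow_add q⁻¹ (2 * r + 1 + 1 + 1) (2 * r + 2), ← mul_assoc, ← mul_pow,
        mul_inv_cancel₀ hq, one_pow, one_mul]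
    have h3 : q ^ (2 * r + 2) * q⁻¹ ^ (2 * r + 2) = (1 : K) := by
      rw [← mul_pow, mul_inv_cancel₀ hq, one_pow]
    rw [Finset.prod_congr rfl hfac, ih x y,
      Finset.prod_Icc_succ_top (Nat.le_add_left 1 r), h1, h2,
      show 2 * (r + 1) = 2 * r + 2 from by ring]
    linear_combination (x - y) *
      (∏ s ∈ Finset.Icc 1 r, (x ^ 2 - (q ^ (2 * s) + q⁻¹ ^ (2 * s)) * x * y + y ^ 2)) *
      y ^ 2 * h3

end final

/-- At `ρ = 0`, the generating polynomial of the higher order q-Dolan–Grady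
relations factorizes and its coefficients are Lusztig's q-binomials:
`(x-y) ∏_{s=1}^r (x² - (q^{2s}+q^{-2s})xy + y²)
  = Σ_{j=0}^{2r+1} (-1)^j [2r+1 choose j]_q x^{2r+1-j} y^j`. -/
theorem stmt13 (K : Type*) [Field K] (q : K) (hq : q ≠ 0)
    (hqroot : ∀ n : ℕ, 0 < n → q ^ n ≠ 1) :
    ∀ r : ℕ, 1 ≤ r → ∀ x y : K,
      (x - y) * ∏ s ∈ Finset.Icc 1 r,
          (x ^ 2 - (q ^ (2 * s) + q⁻¹ ^ (2 * s)) * x * y + y ^ 2)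
        = ∑ j ∈ Finset.range (2 * r + 2),
            (-1 : K) ^ j * qBinom q (2 * r + 1) j * x ^ (2 * r + 1 - j) * y ^ j := by
  intro r _ x y
  have h := key q hq hqroot (2 * r + 1) x y
  rw [show 2 * r + 1 + 1 = 2 * r + 2 from by ring] at h
  rw [← prodLemma q hq r x y]
  exact h.symm
end

section
/- Let K be a field, q ∈ K a unit that is not a root of unity, R an associative unital K-algebra, A, A* ∈ R, and ρ₀ ∈ K. Assume the q-Dolan–Grady relation A³A* − [3]_q·A²A*A + [3]_q·A A* A² − A*A³ = ρ₀·(AA* − A*A), where [3]_q = q² + 1 + q^{−2}. Then for every integer m ≥ 0, the element A^m·A* lies in the K-linear span of the set of elements ρ₀^p·A^i·A*·A^j with integers p, i, j ≥ 0 satisfying i ≤ 2 and i + j + 2p = m. -/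
/-- The ordering (reduction) lemma for the q-Onsager algebra: if `A, A*`
satisfy the q-Dolan–Grady relation, then every monomial `A^m A*` lies in the
`K`-linear span of the elements `ρ₀^p A^i A* A^j` with `i ≤ 2` and
`i + j + 2p = m`. -/
theorem stmt18 (K R : Type*) [Field K] [Ring R] [Algebra K R]
    (q : K) (hq : q ≠ 0) (hqroot : ∀ n : ℕ, 0 < n → q ^ n ≠ 1)
    (A Astar : R) (ρ₀ : K)
    (hDG : A ^ 3 * Astar - (q ^ 2 + 1 + q⁻¹ ^ 2) • (A ^ 2 * Astar * A)
        + (q ^ 2 + 1 + q⁻¹ ^ 2) • (A * Astar * A ^ 2) - Astar * A ^ 3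
      = ρ₀ • (A * Astar - Astar * A)) :
    ∀ m : ℕ, A ^ m * Astar ∈ Submodule.span K
      {x : R | ∃ p i j : ℕ, i ≤ 2 ∧ i + j + 2 * p = m ∧
        x = ρ₀ ^ p • (A ^ i * Astar * A ^ j)} := by
  set c := q ^ 2 + 1 + q⁻¹ ^ 2 with hc
  set S : ℕ → Set R := fun m => {x : R | ∃ p i j : ℕ, i ≤ 2 ∧ i + j + 2 * p = m ∧
        x = ρ₀ ^ p • (A ^ i * Astar * A ^ j)} with hS
  set sp : ℕ → Submodule K R := fun m => Submodule.span K (S m) with hsp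
  show ∀ m, A ^ m * Astar ∈ sp m
  have hmem : ∀ m (p i j : ℕ), i ≤ 2 → i + j + 2 * p = m →
      ρ₀ ^ p • (A ^ i * Astar * A ^ j) ∈ sp m := fun m p i j h1 h2 =>
    Submodule.subset_span ⟨p, i, j, h1, h2, rfl⟩
  have hmul : ∀ m (x : R), x ∈ sp m → x * A ∈ sp (m + 1) := by
    intro m x hx
    have h1 := Submodule.mem_map_of_mem (f := LinearMap.mulRight K A) hx
    rw [Submodule.map_span] at h1
    refine Submodule.span_mono ?_ h1
    rintro y ⟨z, ⟨p, i, j, h1, h2, rfl⟩, rfl⟩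
    refine ⟨p, i, j + 1, h1, by omega, ?_⟩
    simp [smul_mul_assoc, mul_assoc, pow_succ]
  have hmulp : ∀ (k : ℕ) m (x : R), x ∈ sp m → x * A ^ k ∈ sp (m + k) := by
    intro k
    induction k with
    | zero => simpa using fun m x hx => hx
    | succ k ih =>
      intro m x hx
      have h2 := hmul (m + k) _ (ih m x hx)
      rw [pow_succ, ← mul_assoc]
      exact h2
  have hsm : ∀ m (x : R), x ∈ sp m → ρ₀ • x ∈ sp (m + 2) := by
    intro m x hx
    have h1 := Submodule.mem_map_of_mem (f := LinearMap.lsmul K R ρ₀) hx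
    rw [Submodule.map_span] at h1
    refine Submodule.span_mono ?_ h1
    rintro y ⟨z, ⟨p, i, j, h1, h2, rfl⟩, rfl⟩
    refine ⟨p + 1, i, j, h1, by omega, ?_⟩
    simp [smul_smul, pow_succ, mul_comm]
  have key : A ^ 3 * Astar = c • (A ^ 2 * Astar * A) - c • (A * Astar * A ^ 2)
      + Astar * A ^ 3 + ρ₀ • (A * Astar) - ρ₀ • (Astar * A) := by
    rw [smul_sub] at hDG
    linear_combination (norm := module) hDG
  intro m
  induction m using Nat.strong_induction_on with
  | _ m IH =>
    by_cases hm : m ≤ 2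
    · simpa using hmem m 0 m 0 hm (by omega)
    · obtain ⟨n, rfl⟩ : ∃ n, m = n + 3 := ⟨m - 3, by omega⟩
      have expand : A ^ (n + 3) * Astar
          = c • (A ^ (n + 2) * Astar * A) - c • (A ^ (n + 1) * Astar * A ^ 2)
            + A ^ n * Astar * A ^ 3 + ρ₀ • (A ^ (n + 1) * Astar)
            - ρ₀ • (A ^ n * Astar * A) := by
        have h0 : A ^ (n + 3) * Astar = A ^ n * (A ^ 3 * Astar) := by
          rw [← mul_assoc, ← pow_add]
        rw [h0, key]
        simp only [mul_sub, mul_add, mul_smul_comm, ← mul_assoc, ← pow_add, ← pow_succ]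
      rw [expand]
      refine sub_mem (add_mem (add_mem (sub_mem ?_ ?_) ?_) ?_) ?_
      · exact Submodule.smul_mem _ c (hmul (n + 2) _ (IH (n + 2) (by omega)))
      · exact Submodule.smul_mem _ c (hmulp 2 (n + 1) _ (IH (n + 1) (by omega)))
      · exact hmulp 3 n _ (IH n (by omega))
      · exact hsm (n + 1) _ (IH (n + 1) (by omega))
      · exact hsm (n + 1) _ (hmul n _ (IH n (by omega)))
end
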